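/- arXiv:2305.12658 — 7 statements merged into one kernel-verified Lean document; each statement's English description precedes it below -/
import Mathlib

section
/- If a dual matrix Â = A + εB has a dual Drazin generalized inverse, then it is unique. -/
open Matrix Finset

noncomputable section

/-- The dual matrix `A + εB` as a matrix over the dual numbers `ℝ[ε]/(ε²)`. -/
def dmat {m : Type*} (A B : Matrix m m ℝ) : Matrix m m (DualNumber ℝ) :=
  Matrix.of fun i j => TrivSqZeroExt.inl (A i j) + TrivSqZeroExt.inr (B i j)

/-- `x` is a Drazin inverse of `a` with index parameter `k`
(for `k = 1` this is the group inverse). -/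
def IsDrazin {R : Type*} [Monoid R] (k : ℕ) (a x : R) : Prop :=
  a ^ k * x * a = a ^ k ∧ x * a * x = x ∧ a * x = x * a

/-- `A` has index `k`: `k` is the smallest nonnegative integer with
`rank (A^k) = rank (A^(k+1))`. -/
def hasIndex {m : Type*} [Fintype m] [DecidableEq m] (A : Matrix m m ℝ) (k : ℕ) : Prop :=
  (A ^ (k + 1)).rank = (A ^ k).rank ∧ ∀ j < k, (A ^ (j + 1)).rank ≠ (A ^ j).rank

/-- `D = A^{k-1} B + A^{k-2} B A + ⋯ + B A^{k-1}`. -/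
def dsum {m : Type*} [Fintype m] [DecidableEq m] (A B : Matrix m m ℝ) (k : ℕ) :
    Matrix m m ℝ :=
  ∑ i ∈ Finset.range k, A ^ i * B * A ^ (k - 1 - i)

theorem drazin_unique {M : Type*} [Monoid M] {k : ℕ} {a x y : M}
    (hX : IsDrazin k a x) (hY : IsDrazin k a y) : x = y := by
  obtain ⟨hx1, hx2, hx3⟩ := hX
  obtain ⟨hy1, hy2, hy3⟩ := hY
  have cax : Commute a x := hx3
  have cay : Commute a y := hy3
  have hxa : x * a ^ (k + 1) = a ^ k := by
    rw [pow_succ, ← mul_assoc, ← (cax.pow_left k).eq, hx1]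
  have hay : a ^ (k + 1) * y = a ^ k := by
    rw [pow_succ, mul_assoc, cay.eq, ← mul_assoc, hy1]
  have hya : y * a ^ (k + 1) = a ^ k := by
    rw [← (cay.pow_left (k + 1)).eq, hay]
  have idem_ax : ((a * x) * (a * x)) = a * x := by
    rw [mul_assoc a x (a * x), ← mul_assoc x a x, hx2]
  have idem_xa : ((x * a) * (x * a)) = x * a := by
    rw [← mul_assoc, hx2]
  have idem_ay : ((a * y) * (a * y)) = a * y := by
    rw [mul_assoc a y (a * y), ← mul_assoc y a y, hy2]
  have pow_ax : (a * x) ^ (k + 1) = a * x := IsIdempotentElem.pow_succ_eq k idem_ax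
  have pow_xa : (x * a) ^ (k + 1) = x * a := IsIdempotentElem.pow_succ_eq k idem_xa
  have pow_ay : (a * y) ^ (k + 1) = a * y := IsIdempotentElem.pow_succ_eq k idem_ay
  have key_x : x = (x * a) * y := by
    calc x = x * (a * x) ^ (k + 1) := by rw [pow_ax, ← mul_assoc, hx2]
      _ = x * (a ^ (k + 1) * x ^ (k + 1)) := by rw [cax.mul_pow]
      _ = (x * a ^ (k + 1)) * x ^ (k + 1) := by rw [mul_assoc]
      _ = a ^ k * x ^ (k + 1) := by rw [hxa]
      _ = x ^ (k + 1) * a ^ k := ((cax.pow_left k).pow_right (k + 1)).eq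
      _ = x ^ (k + 1) * (a ^ (k + 1) * y) := by rw [hay]
      _ = (x ^ (k + 1) * a ^ (k + 1)) * y := by rw [mul_assoc]
      _ = (x * a) ^ (k + 1) * y := by rw [cax.symm.mul_pow]
      _ = (x * a) * y := by rw [pow_xa]
  have key_y : y = (x * a) * y := by
    calc y = y * (a * y) ^ (k + 1) := by rw [pow_ay, ← mul_assoc, hy2]
      _ = y * (a ^ (k + 1) * y ^ (k + 1)) := by rw [cay.mul_pow]
      _ = (y * a ^ (k + 1)) * y ^ (k + 1) := by rw [mul_assoc]
      _ = a ^ k * y ^ (k + 1) := by rw [hya]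
      _ = (x * a ^ (k + 1)) * y ^ (k + 1) := by rw [hxa]
      _ = x * (a ^ (k + 1) * y ^ (k + 1)) := by rw [mul_assoc]
      _ = x * (a * y) ^ (k + 1) := by rw [cay.mul_pow]
      _ = x * (a * y) := by rw [pow_ay]
      _ = (x * a) * y := by rw [mul_assoc]
  exact key_x.trans key_y.symm

theorem ddgi_unique {n k : ℕ} (A B : Matrix (Fin n) (Fin n) ℝ) (hk : hasIndex A k)
    (X Y : Matrix (Fin n) (Fin n) (DualNumber ℝ))
    (hX : IsDrazin k (dmat A B) X) (hY : IsDrazin k (dmat A B) Y) : X = Y := by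
  exact drazin_unique hX hY
end
end

section
/- Let Â = A + εB with Ind(Â) = k and set D = A^{k-1}B + A^{k-2}BA + ⋯ + ABA^{k-2} + BA^{k-1}. The dual Drazin generalized inverse of Â exists if and only if (I − AA^D) D (A^D A − I) = 0. Moreover, when it exists, Â^D = A^D + εR where R = −A^D B A^D + (A^D)^{k+1} D (I − AA^D) + (I − AA^D) D (A^D)^{k+1}. -/
open Matrix Finset

noncomputable section

/-! ### Auxiliary lemmas about `dmat` -/

lemma dmat_fst_snd {m : Type*} (X : Matrix m m (DualNumber ℝ)) :
    X = dmat (fun i j => (X i j).fst) (fun i j => (X i j).snd) := by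
  refine Matrix.ext fun i j => ?_
  exact (TrivSqZeroExt.inl_fst_add_inr_snd_eq (X i j)).symm

lemma dmat_congr {m : Type*} {A B C D : Matrix m m ℝ} (h1 : A = C) (h2 : B = D) :
    dmat A B = dmat C D := by rw [h1, h2]

lemma dmat_inj {m : Type*} {A B C D : Matrix m m ℝ} (h : dmat A B = dmat C D) :
    A = C ∧ B = D := by
  constructor <;> ext i j
  · have h' := congrFun (congrFun h i) j
    simpa [dmat] using congrArg TrivSqZeroExt.fst h'
  · have h' := congrFun (congrFun h i) j
    simpa [dmat] using congrArg TrivSqZeroExt.snd h'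

lemma dmat_mul {m : Type*} [Fintype m] (A B C D : Matrix m m ℝ) :
    dmat A B * dmat C D = dmat (A * C) (A * D + B * C) := by
  ext i j
  · simp [dmat, Matrix.mul_apply, TrivSqZeroExt.fst_sum, TrivSqZeroExt.fst_mul]
  · simp [dmat, Matrix.mul_apply, TrivSqZeroExt.snd_sum, TrivSqZeroExt.snd_mul,
      smul_eq_mul, op_smul_eq_mul, Finset.sum_add_distrib]

lemma dmat_one {m : Type*} [Fintype m] [DecidableEq m] :
    (1 : Matrix m m (DualNumber ℝ)) = dmat 1 0 := by
  ext i j <;> by_cases h : i = j <;> simp [dmat, Matrix.one_apply, h, apply_ite]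

/-! ### Recurrences for `dsum` -/

lemma ds1 {m : Type*} [Fintype m] [DecidableEq m] (A B : Matrix m m ℝ) (j : ℕ) :
    dsum A B (j + 1) = A * dsum A B j + B * A ^ j := by
  unfold dsum
  rw [Finset.sum_range_succ', Finset.mul_sum]
  congr 1
  · refine Finset.sum_congr rfl fun i hi => ?_
    rw [Finset.mem_range] at hi
    have h1 : j + 1 - 1 - (i + 1) = j - 1 - i := by omega
    rw [h1, pow_succ' A i, mul_assoc A, mul_assoc A]
  · have h0 : j + 1 - 1 - 0 = j := by omega
    rw [h0, pow_zero, one_mul]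

lemma ds2 {m : Type*} [Fintype m] [DecidableEq m] (A B : Matrix m m ℝ) (j : ℕ) :
    dsum A B (j + 1) = dsum A B j * A + A ^ j * B := by
  unfold dsum
  rw [Finset.sum_range_succ, Finset.sum_mul]
  congr 1
  · refine Finset.sum_congr rfl fun i hi => ?_
    rw [Finset.mem_range] at hi
    have h1 : j + 1 - 1 - i = (j - 1 - i) + 1 := by omega
    rw [h1, pow_succ, ← mul_assoc]
  · have h0 : j + 1 - 1 - j = 0 := by omega
    rw [h0, pow_zero, mul_one]

lemma dmat_pow {m : Type*} [Fintype m] [DecidableEq m] (A B : Matrix m m ℝ) (j : ℕ) :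
    dmat A B ^ j = dmat (A ^ j) (dsum A B j) := by
  induction j with
  | zero =>
    rw [pow_zero, pow_zero]
    have h0 : dsum A B 0 = 0 := by simp [dsum]
    rw [h0]
    exact dmat_one
  | succ j ih =>
    rw [pow_succ, ih, dmat_mul, ← pow_succ, ds2]
    exact dmat_congr rfl (by rw [add_comm])

/-! ### Uniqueness of the Drazin inverse -/

lemma unique_aux {R : Type*} [Ring R] (a x y u v K : R)
    (hx1 : K * x * a = K) (hy1 : K * y * a = K)
    (hu : x = u * K) (hv : y = K * v)
    (hcKx : K * x = x * K) (hcKa : K * a = a * K) (hcay : a * y = y * a) :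
    x = y := by
  have e1 : x = x * y * a := by
    calc x = u * K := hu
      _ = u * (K * y * a) := by rw [hy1]
      _ = (u * K) * y * a := by noncomm_ring
      _ = x * y * a := by rw [← hu]
  have e2 : y = x * a * y := by
    calc y = K * v := hv
      _ = (K * x * a) * v := by rw [hx1]
      _ = (K * x) * (a * v) := by noncomm_ring
      _ = (x * K) * (a * v) := by rw [hcKx]
      _ = x * (K * a) * v := by noncomm_ring
      _ = x * (a * K) * v := by rw [hcKa]
      _ = x * a * (K * v) := by noncomm_ring
      _ = x * a * y := by rw [← hv]
  calc x = x * y * a := e1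
    _ = x * (y * a) := by rw [mul_assoc]
    _ = x * (a * y) := by rw [← hcay]
    _ = x * a * y := by rw [← mul_assoc]
    _ = y := e2.symm

lemma drazin_unique_s5 {R : Type*} [Ring R] {k : ℕ} {a x y : R}
    (hx : IsDrazin k a x) (hy : IsDrazin k a y) : x = y := by
  obtain ⟨hx1, hx2, hx3⟩ := hx
  obtain ⟨hy1, hy2, hy3⟩ := hy
  have cax : Commute a x := hx3
  have cay : Commute a y := hy3
  have hpow : ∀ z : R, z * a * z = z → a * z = z * a → ∀ m, z ^ (m + 1) * a ^ m = z := by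
    intro z hz2 hz3 m
    induction m with
    | zero => simp
    | succ m ih =>
      have hstep : z ^ (m + 1 + 1) * a ^ (m + 1) = z * (z ^ (m + 1) * a ^ m) * a := by
        rw [pow_succ' z (m + 1), pow_succ a m]; noncomm_ring
      rw [hstep, ih, mul_assoc, ← hz3, ← mul_assoc, hz2]
  have hu : x = x ^ (k + 1) * a ^ k := (hpow x hx2 hx3 k).symm
  have hv : y = a ^ k * y ^ (k + 1) := by
    have h1 : y ^ (k + 1) * a ^ k = a ^ k * y ^ (k + 1) :=
      ((cay.symm.pow_pow (k + 1) k))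
    rw [← h1]; exact (hpow y hy2 hy3 k).symm
  exact unique_aux a x y (x ^ (k + 1)) (y ^ (k + 1)) (a ^ k) hx1 hy1 hu hv
    (cax.pow_left k) ((Commute.refl a).pow_left k) hy3

/-! ### The key ring computations -/

lemma epsE1 {R : Type*} [Ring R] (A AD B D K L : R)
    (hc : A * AD = AD * A)
    (hKP : K * (A * AD) = K)
    (hKL : K * L = AD)
    (hKAD : K * AD = AD * K)
    (htel : A * D - D * A = K * B - B * K)
    (hcond : (1 - A * AD) * D * (1 - A * AD) = 0) :
    K * AD * B + (K * (-(AD * B * AD) + L * D * (1 - A * AD) + (1 - A * AD) * D * L)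
      + D * AD) * A = D := by
  linear_combination (norm := noncomm_ring)
    hKL * (D * (1 - A * AD) * A) - hKP * (D * L * A) + (AD * D * A) * hc
    - AD * htel * (1 - A * AD) - hc * (D * (1 - A * AD)) - hcond
    + hKAD * (B * (1 - A * AD)) - (AD * B) * hKP + (K * AD * B) * hc - D * hc

lemma epsE2 {R : Type*} [Ring R] (A AD B D L : R)
    (hc : A * AD = AD * A)
    (hADP : AD * (A * AD) = AD)
    (hPAD : (A * AD) * AD = AD)
    (hPP : (A * AD) * (A * AD) = A * AD)
    (hPL : (A * AD) * L = L)
    (hLP : L * (A * AD) = L) :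
    AD * A * (-(AD * B * AD) + L * D * (1 - A * AD) + (1 - A * AD) * D * L)
      + (AD * B + (-(AD * B * AD) + L * D * (1 - A * AD) + (1 - A * AD) * D * L) * A) * AD
      = -(AD * B * AD) + L * D * (1 - A * AD) + (1 - A * AD) * D * L := by
  linear_combination (norm := noncomm_ring)
    -(hc * (-(AD * B * AD) + L * D * (1 - A * AD) + (1 - A * AD) * D * L))
    - hPAD * (B * AD) + hPL * (D * (1 - A * AD)) - hPP * (D * L)
    - (AD * B) * hADP - (L * D) * hPP + ((1 - A * AD) * D) * hLP

lemma epsE3 {R : Type*} [Ring R] (A AD B D K L : R)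
    (hc : A * AD = AD * A)
    (hKP : K * (A * AD) = K)
    (hPK : (A * AD) * K = K)
    (hKL : K * L = AD)
    (hLK : L * K = AD)
    (hAL : A * L = L * A)
    (htel : A * D - D * A = K * B - B * K) :
    A * (-(AD * B * AD) + L * D * (1 - A * AD) + (1 - A * AD) * D * L) + B * AD
      = AD * B + (-(AD * B * AD) + L * D * (1 - A * AD) + (1 - A * AD) * D * L) * A := by
  linear_combination (norm := noncomm_ring)
    -((AD * B) * hc) + hAL * (D * (1 - A * AD)) - (L * D * A) * hc
    + L * htel * (1 - A * AD) + hLK * (B * (1 - A * AD)) + (L * B) * hKP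
    - A * hc * (D * L) + ((1 - A * AD) * D) * hAL + (1 - A * AD) * htel * L
    - hPK * (B * L) - ((1 - A * AD) * B) * hKL

lemma fwd_ring {R : Type*} [Ring R] (A AD B D K X1 : R)
    (hE : K * AD * B + (K * X1 + D * AD) * A = D)
    (hNK : (1 - A * AD) * K = 0)
    (hADP : AD * (A * AD) = AD) :
    (1 - A * AD) * D * (AD * A - 1) = 0 := by
  linear_combination (norm := noncomm_ring)
    -((1 - A * AD) * hE * (AD * A - 1)) + hNK * (AD * B * (AD * A - 1))
    + hNK * (X1 * A * (AD * A - 1)) + ((1 - A * AD) * D) * hADP * A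

/-! ### Facts derived from a Drazin inverse -/

section facts
variable {R : Type*} [Ring R] {k : ℕ} {A AD : R} (h : IsDrazin k A AD)

include h

lemma fact_hADP : AD * (A * AD) = AD := by rw [← mul_assoc]; exact h.2.1

lemma fact_hPAD : (A * AD) * AD = AD := by rw [h.2.2]; exact h.2.1

lemma fact_hPP : (A * AD) * (A * AD) = A * AD := by rw [mul_assoc A AD, fact_hADP h]

lemma fact_hKP : A ^ k * (A * AD) = A ^ k := by rw [h.2.2, ← mul_assoc]; exact h.1

lemma fact_hPK : (A * AD) * A ^ k = A ^ k := by
  have c : Commute (A * AD) A := by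
    show (A * AD) * A = A * (A * AD)
    rw [mul_assoc, ← h.2.2]
  exact (c.pow_right k).trans (fact_hKP h)

lemma fact_hNK : (1 - A * AD) * A ^ k = 0 := by
  rw [sub_mul, one_mul, fact_hPK h, sub_self]

lemma fact_hPpowAD : ∀ m : ℕ, (A * AD) ^ m * AD = AD := by
  intro m
  induction m with
  | zero => rw [pow_zero, one_mul]
  | succ m ih => rw [pow_succ, mul_assoc, fact_hPAD h, ih]

lemma fact_hADPpow : ∀ m : ℕ, AD * (A * AD) ^ m = AD := by
  intro m
  induction m with
  | zero => rw [pow_zero, mul_one]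
  | succ m ih => rw [pow_succ, ← mul_assoc, ih, fact_hADP h]

lemma fact_hKL : A ^ k * AD ^ (k + 1) = AD := by
  have cA : Commute A AD := h.2.2
  rw [pow_succ AD k, ← mul_assoc, ← cA.mul_pow k]
  exact fact_hPpowAD h k

lemma fact_hLK : AD ^ (k + 1) * A ^ k = AD := by
  have cA : Commute AD A := h.2.2.symm
  rw [pow_succ' AD k, mul_assoc, ← cA.mul_pow k, ← h.2.2]
  exact fact_hADPpow h k

lemma fact_hAL : A * AD ^ (k + 1) = AD ^ (k + 1) * A := by
  have c : Commute A AD := h.2.2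
  exact c.pow_right (k + 1)

lemma fact_hKAD : A ^ k * AD = AD * A ^ k := by
  have c : Commute A AD := h.2.2
  exact c.pow_left k

lemma fact_hPL : (A * AD) * AD ^ (k + 1) = AD ^ (k + 1) := by
  rw [pow_succ' AD k, ← mul_assoc, fact_hPAD h]

lemma fact_hLP : AD ^ (k + 1) * (A * AD) = AD ^ (k + 1) := by
  rw [pow_succ AD k, mul_assoc, fact_hADP h]

end facts

lemma tel_lemma {m : Type*} [Fintype m] [DecidableEq m] (A B : Matrix m m ℝ) (k : ℕ) :
    A * dsum A B k - dsum A B k * A = A ^ k * B - B * A ^ k := by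
  have e := (ds1 A B k).symm.trans (ds2 A B k)
  linear_combination (norm := noncomm_ring) e

/-- The main verification: the condition implies the explicit formula is a DDGI. -/
lemma verify {n k : ℕ} (A B AD : Matrix (Fin n) (Fin n) ℝ)
    (hAD : IsDrazin k A AD)
    (hcond : (1 - A * AD) * dsum A B k * (AD * A - 1) = 0) :
    IsDrazin k (dmat A B)
      (dmat AD (-(AD * B * AD) + AD ^ (k + 1) * dsum A B k * (1 - A * AD) +
        (1 - A * AD) * dsum A B k * AD ^ (k + 1))) := by
  obtain ⟨h1, h2, h3⟩ := hAD
  have hAD' : IsDrazin k A AD := ⟨h1, h2, h3⟩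
  have hcond' : (1 - A * AD) * dsum A B k * (1 - A * AD) = 0 := by
    linear_combination (norm := noncomm_ring) -hcond - ((1 - A * AD) * dsum A B k) * h3
  refine ⟨?_, ?_, ?_⟩
  · rw [dmat_pow, dmat_mul, dmat_mul]
    exact dmat_congr h1
      (epsE1 A AD B (dsum A B k) (A ^ k) (AD ^ (k + 1)) h3 (fact_hKP hAD')
        (fact_hKL hAD') (fact_hKAD hAD') (tel_lemma A B k) hcond')
  · rw [dmat_mul, dmat_mul]
    exact dmat_congr h2
      (epsE2 A AD B (dsum A B k) (AD ^ (k + 1)) h3 (fact_hADP hAD') (fact_hPAD hAD')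
        (fact_hPP hAD') (fact_hPL hAD') (fact_hLP hAD'))
  · rw [dmat_mul, dmat_mul]
    exact dmat_congr h3
      (epsE3 A AD B (dsum A B k) (A ^ k) (AD ^ (k + 1)) h3 (fact_hKP hAD')
        (fact_hPK hAD') (fact_hKL hAD') (fact_hLK hAD') (fact_hAL hAD')
        (tel_lemma A B k))

theorem ddgi_exists_iff {n k : ℕ} (A B AD : Matrix (Fin n) (Fin n) ℝ)
    (hk : hasIndex A k) (hAD : IsDrazin k A AD) :
    ((∃ X : Matrix (Fin n) (Fin n) (DualNumber ℝ), IsDrazin k (dmat A B) X) ↔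
      (1 - A * AD) * dsum A B k * (AD * A - 1) = 0) ∧
    ((∃ X : Matrix (Fin n) (Fin n) (DualNumber ℝ), IsDrazin k (dmat A B) X) →
      IsDrazin k (dmat A B)
        (dmat AD (-(AD * B * AD) + AD ^ (k + 1) * dsum A B k * (1 - A * AD) +
          (1 - A * AD) * dsum A B k * AD ^ (k + 1)))) := by
  have key : (∃ X : Matrix (Fin n) (Fin n) (DualNumber ℝ), IsDrazin k (dmat A B) X) →
      (1 - A * AD) * dsum A B k * (AD * A - 1) = 0 := by
    rintro ⟨X, hX⟩
    obtain ⟨F, S, hXeq⟩ : ∃ F S : Matrix (Fin n) (Fin n) ℝ, X = dmat F S :=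
      ⟨_, _, dmat_fst_snd X⟩
    rw [hXeq] at hX
    obtain ⟨e1, e2, e3⟩ := hX
    rw [dmat_pow, dmat_mul, dmat_mul] at e1
    rw [dmat_mul, dmat_mul] at e2
    rw [dmat_mul, dmat_mul] at e3
    obtain ⟨e1r, e1e⟩ := dmat_inj e1
    obtain ⟨e2r, e2e⟩ := dmat_inj e2
    obtain ⟨e3r, e3e⟩ := dmat_inj e3
    have hX0 : IsDrazin k A F := ⟨e1r, e2r, e3r⟩
    have hX0AD : F = AD := drazin_unique_s5 hX0 hAD
    rw [hX0AD] at e1e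
    exact fwd_ring A AD B (dsum A B k) (A ^ k) S e1e
      (fact_hNK hAD) (fact_hADP hAD)
  constructor
  · constructor
    · exact key
    · intro hc
      exact ⟨_, verify A B AD hAD hc⟩
  · intro hex
    exact verify A B AD hAD (key hex)

end
end

section
/- If the DDGI of a dual matrix Â = A + εB exists with Ind(Â) = k, then R(Â^k) ∩ N(Â^k) = {0}, where R and N denote the range and null space of Â^k acting on dual vectors. -/
open Matrix Finset

noncomputable section

theorem ddgi_range_inter_null {n k : ℕ} (A B : Matrix (Fin n) (Fin n) ℝ)
    (hk : hasIndex A k)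
    (hex : ∃ X : Matrix (Fin n) (Fin n) (DualNumber ℝ), IsDrazin k (dmat A B) X) :
    ∀ v : Fin n → DualNumber ℝ,
      (∃ z : Fin n → DualNumber ℝ, ((dmat A B) ^ k).mulVec z = v) →
      ((dmat A B) ^ k).mulVec v = 0 → v = 0 := by
  obtain ⟨X, h1, h2, h3⟩ := hex
  set M := dmat A B with hM
  have hc : Commute M X := h3
  -- M^k * (X*M)^j = M^k for all j
  have key : ∀ j : ℕ, M ^ k * (X * M) ^ j = M ^ k := by
    intro j
    induction j with
    | zero => simp
    | succ j ih =>
      rw [pow_succ, ← mul_assoc, ih, ← mul_assoc, h1]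
  have hmain : X ^ k * (M ^ k * M ^ k) = M ^ k := by
    have := key k
    rw [hc.symm.mul_pow] at this
    calc X ^ k * (M ^ k * M ^ k) = M ^ k * (X ^ k * M ^ k) := by
          rw [← mul_assoc, ← mul_assoc, (hc.pow_pow k k).symm.eq]
      _ = M ^ k := this
  rintro v ⟨z, hz⟩ hv
  have : (X ^ k * (M ^ k * M ^ k)).mulVec z = (M ^ k).mulVec z := by rw [hmain]
  rw [← Matrix.mulVec_mulVec, ← Matrix.mulVec_mulVec, hz, hv] at this
  rw [← this, Matrix.mulVec_zero]
end
end

section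
/- If the DDGI of Â exists, then Â^D b̂ is the unique solution of the system Âx̂ = b̂ subject to x̂ ∈ R(Â^k), where k = Ind(Â). -/
open Matrix Finset

noncomputable section

theorem ddgi_unique_solution_in_range {n k : ℕ} (A B : Matrix (Fin n) (Fin n) ℝ)
    (hk : hasIndex A k)
    (Xhat : Matrix (Fin n) (Fin n) (DualNumber ℝ))
    (hX : IsDrazin k (dmat A B) Xhat)
    (b : Fin n → DualNumber ℝ)
    (hb : (dmat A B).mulVec (Xhat.mulVec b) = b) :
    ((dmat A B).mulVec (Xhat.mulVec b) = b ∧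
      ∃ z : Fin n → DualNumber ℝ, ((dmat A B) ^ k).mulVec z = Xhat.mulVec b) ∧
    (∀ x : Fin n → DualNumber ℝ, (dmat A B).mulVec x = b →
      (∃ z : Fin n → DualNumber ℝ, ((dmat A B) ^ k).mulVec z = x) →
      x = Xhat.mulVec b) := by
  obtain ⟨h1, h2, h3⟩ := hX
  set M := dmat A B with hM
  have hc : Commute M Xhat := h3
  have key : Xhat * Xhat * M = Xhat := by
    rw [mul_assoc, ← h3, ← mul_assoc, h2]
  have aux : ∀ j, Xhat = Xhat ^ (j + 1) * M ^ j := by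
    intro j
    induction j with
    | zero => simp
    | succ j ih =>
      have step : Xhat ^ (j + 2) * M ^ (j + 1) = Xhat ^ (j + 1) * M ^ j := by
        have h : Xhat ^ (j + 2) * M ^ (j + 1)
            = Xhat ^ j * (Xhat * Xhat * M) * M ^ j := by
          rw [pow_succ Xhat, pow_succ Xhat, pow_succ' M]
          simp [mul_assoc]
        rw [h, key, ← pow_succ]
      exact ih.trans step.symm
  have hMk : (M ^ k : Matrix (Fin n) (Fin n) (DualNumber ℝ)) = Xhat * M * M ^ k := by
    conv_lhs => rw [← h1]
    rw [(hc.pow_left k).eq, mul_assoc, mul_assoc, ← pow_succ' M k, pow_succ M k,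
      ← mul_assoc]
  refine ⟨⟨hb, ⟨(Xhat ^ (k + 1)).mulVec b, ?_⟩⟩, ?_⟩
  · rw [mulVec_mulVec, (hc.pow_pow k (k + 1)).eq, ← aux k]
  · rintro x hx ⟨z, hz⟩
    calc x = (M ^ k).mulVec z := hz.symm
      _ = (Xhat * M * M ^ k).mulVec z := by rw [← hMk]
      _ = Xhat.mulVec (M.mulVec ((M ^ k).mulVec z)) := by
          rw [mulVec_mulVec, mulVec_mulVec, mul_assoc]
      _ = Xhat.mulVec b := by rw [hz, hx]
end
end

section
/- The dual group inverse does not exist for every square dual matrix of index 1: for A = diag(4, 0, 5) and B = [[1,0,4],[1,2,0],[0,2,0]], the dual matrix Â = A + εB has no dual group generalized inverse. -/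
open Matrix Finset

noncomputable section

theorem dggi_not_always_exists :
    ¬ ∃ X : Matrix (Fin 3) (Fin 3) (DualNumber ℝ),
      IsDrazin 1
        (dmat (!![(4:ℝ),0,0; 0,0,0; 0,0,5]) (!![(1:ℝ),0,4; 1,2,0; 0,2,0])) X := by
  rintro ⟨X, h1, -, -⟩
  rw [pow_one] at h1
  have h := congrArg TrivSqZeroExt.snd (congrFun (congrFun h1 1) 1)
  simp [dmat, Matrix.mul_apply, Fin.sum_univ_three, TrivSqZeroExt.snd_mul,
    TrivSqZeroExt.fst_mul, smul_eq_mul, op_smul_eq_mul] at h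
end
end

section
/- The D-group order on dual matrices possessing a DGGI is a partial order: it is reflexive, antisymmetric, and transitive. -/
open Matrix Finset

noncomputable section

/-- The D-group order on dual matrices admitting a dual group generalized inverse. -/
def dgOrder {n : ℕ} (M N : Matrix (Fin n) (Fin n) (DualNumber ℝ)) : Prop :=
  ∃ X, IsDrazin 1 M X ∧ X * M = X * N ∧ M * X = N * X

section
variable {R : Type*} [Monoid R]

lemma aux_trans {a b c x y : R}
    (ha : a * x * a = a) (hxax : x * a * x = x) (hcom : a * x = x * a)
    (h1 : x * a = x * b) (h2 : a * x = b * x)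
    (hb : b * y * b = b) (hyby : y * b * y = y) (hcomb : b * y = y * b)
    (h3 : y * b = y * c) (h4 : b * y = c * y) :
    x * a = x * c ∧ a * x = c * x := by
  have haxb : a * x * b = a := by rw [mul_assoc, ← h1, ← mul_assoc, ha]
  have hbyc : b * y * c = b := by rw [mul_assoc, ← h3, ← mul_assoc, hb]
  have hbxa : b * x * a = a := by rw [← h2, ha]
  have hcyb : c * y * b = b := by rw [← h4, hb]
  have hxaa : x * a * a = a := by rw [← hcom, ha]
  have haxx : a * x * x = x := by rw [hcom, hxax]
  have hxxa : x * x * a = x := by rw [mul_assoc, ← hcom, ← mul_assoc, hxax]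
  have haax : a * a * x = a := by rw [mul_assoc, hcom, ← mul_assoc, ha]
  -- b*c = b*b
  have hbc : b * c = b * b := by
    calc b * c = b * y * b * c := by rw [hb]
      _ = b * (y * b) * c := by rw [mul_assoc b y b]
      _ = b * (b * y) * c := by rw [hcomb]
      _ = b * b * (y * c) := by rw [← mul_assoc, mul_assoc (b*b) y c]
      _ = b * b * (y * b) := by rw [← h3]
      _ = b * (b * y * b) := by rw [mul_assoc b b, ← mul_assoc b y b]
      _ = b * b := by rw [hb]
  have hcb : c * b = b * b := by
    calc c * b = c * (b * y * b) := by rw [hb]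
      _ = c * (y * b) * b := by rw [← hcomb, ← mul_assoc, ← mul_assoc]
      _ = c * y * b * b := by rw [mul_assoc c y b]
      _ = b * b := by rw [hcyb]
  -- a*c = a*a
  have hac : a * c = a * a := by
    calc a * c = a * x * b * c := by rw [haxb]
      _ = a * x * (b * c) := by rw [mul_assoc (a*x) b c]
      _ = a * x * (b * b) := by rw [hbc]
      _ = a * x * b * b := by rw [mul_assoc (a*x) b b]
      _ = a * b := by rw [haxb]
      _ = a * x * a * b := by rw [ha]
      _ = a * (x * a) * b := by simp only [mul_assoc]
      _ = a * (a * x) * b := by rw [hcom]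
      _ = a * a * (x * b) := by rw [← mul_assoc, mul_assoc (a*a) x b]
      _ = a * a * (x * a) := by rw [← h1]
      _ = a * (a * x * a) := by rw [mul_assoc, ← mul_assoc a x a]
      _ = a * a := by rw [ha]
  have hca : c * a = a * a := by
    calc c * a = c * (b * x * a) := by rw [hbxa]
      _ = c * b * (x * a) := by simp only [mul_assoc]
      _ = b * b * (x * a) := by rw [hcb]
      _ = b * (b * x * a) := by rw [mul_assoc b b, ← mul_assoc b x a]
      _ = b * a := by rw [hbxa]
      _ = b * (x * a * a) := by rw [hxaa]
      _ = b * x * a * a := by rw [← mul_assoc, ← mul_assoc]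
      _ = a * a := by rw [hbxa]
  constructor
  · calc x * a = x * x * a * a := by rw [hxxa]
      _ = x * x * (a * a) := by rw [mul_assoc (x*x) a a]
      _ = x * x * (a * c) := by rw [hac]
      _ = x * x * a * c := by rw [mul_assoc (x*x) a c]
      _ = x * c := by rw [hxxa]
  · calc a * x = a * (a * x * x) := by rw [haxx]
      _ = a * a * (x * x) := by simp only [mul_assoc]
      _ = c * a * (x * x) := by rw [hca]
      _ = c * (a * x * x) := by rw [mul_assoc c a, ← mul_assoc a x x]
      _ = c * x := by rw [haxx]

lemma aux_antisymm {a b x y : R}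
    (ha : a * x * a = a) (h2 : a * x = b * x)
    (hb : b * y * b = b) (h3 : y * b = y * a) (h4 : b * y = a * y) :
    a = b := by
  have hbaya : b = a * y * a := by
    calc b = b * y * b := hb.symm
      _ = a * y * b := by rw [← h4]
      _ = a * (y * b) := by rw [mul_assoc]
      _ = a * (y * a) := by rw [h3]
      _ = a * y * a := by rw [mul_assoc]
  calc a = a * x * a := ha.symm
    _ = b * x * a := by rw [← h2]
    _ = (a * y * a) * x * a := by rw [← hbaya]
    _ = a * y * (a * x * a) := by simp only [mul_assoc]
    _ = a * y * a := by rw [ha]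
    _ = b := hbaya.symm

end

theorem dgroup_order_is_partial_order {n : ℕ} :
    (∀ M : Matrix (Fin n) (Fin n) (DualNumber ℝ),
      (∃ X, IsDrazin 1 M X) → dgOrder M M) ∧
    (∀ M N : Matrix (Fin n) (Fin n) (DualNumber ℝ),
      dgOrder M N → dgOrder N M → M = N) ∧
    (∀ M N P : Matrix (Fin n) (Fin n) (DualNumber ℝ),
      dgOrder M N → dgOrder N P → dgOrder M P) := by
  refine ⟨?_, ?_, ?_⟩
  · rintro M ⟨X, hX⟩
    exact ⟨X, hX, rfl, rfl⟩
  · rintro M N ⟨X, ⟨ha, hxax, hcom⟩, h1, h2⟩ ⟨Y, ⟨hb, hyby, hcomb⟩, h3, h4⟩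
    simp only [pow_one] at ha hb
    exact aux_antisymm ha h2 hb h3 h4
  · rintro M N P ⟨X, ⟨ha, hxax, hcom⟩, h1, h2⟩ ⟨Y, ⟨hb, hyby, hcomb⟩, h3, h4⟩
    simp only [pow_one] at ha hb
    obtain ⟨e1, e2⟩ := aux_trans ha hxax hcom h1 h2 hb hyby hcomb h3 h4
    exact ⟨X, ⟨by rwa [pow_one], hxax, hcom⟩, e1, e2⟩
end
end

section
/- For real square matrices A, B, C with Ind(B) = k and Ind(C) = l, rank([[A, B^k],[C^l, 0]]) = rank(B^k) + rank(C^l) + rank((I − BB^D) A (I − CC^D)), where B^D, C^D are Drazin inverses. Consequently, for Â = A + εB with Ind(A) = k and D = A^{k-1}B + ⋯ + BA^{k-1}, the condition (I − AA^D) D (I − AA^D) = 0 holds if and only if rank([[D, A^k],[A^k, 0]]) = 2·rank(A^k). -/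
open Matrix Finset

noncomputable section

section RankAux

variable {m k₁ k₂ : Type*} [Fintype m] [Fintype k₁] [Fintype k₂]

/-- If `P` kills the columns of `X` and fixes the columns of `Y`, the column spaces
intersect trivially, so ranks add. -/
lemma rank_fromColumns_add (X : Matrix m k₁ ℝ) (Y : Matrix m k₂ ℝ) (P : Matrix m m ℝ)
    (hX : P * X = 0) (hY : P * Y = Y) :
    (fromCols X Y).rank = X.rank + Y.rank := by
  have hrange : LinearMap.range (fromCols X Y).mulVecLin =
      LinearMap.range X.mulVecLin ⊔ LinearMap.range Y.mulVecLin := by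
    apply le_antisymm
    · rintro v ⟨w, rfl⟩
      have hw : w = Sum.elim (w ∘ Sum.inl) (w ∘ Sum.inr) := by ext (i | i) <;> rfl
      rw [mulVecLin_apply, hw, fromCols_mulVec_sumElim]
      exact Submodule.add_mem_sup ⟨_, rfl⟩ ⟨_, rfl⟩
    · apply sup_le
      · rintro v ⟨w, rfl⟩
        exact ⟨Sum.elim w 0, by simp⟩
      · rintro v ⟨w, rfl⟩
        exact ⟨Sum.elim 0 w, by simp⟩
  have hinf : LinearMap.range X.mulVecLin ⊓ LinearMap.range Y.mulVecLin = ⊥ := by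
    rw [eq_bot_iff]
    rintro v ⟨⟨a, ha⟩, ⟨b, hb⟩⟩
    have h1 : P *ᵥ v = 0 := by
      rw [← ha, mulVecLin_apply, mulVec_mulVec, hX, zero_mulVec]
    have h2 : P *ᵥ v = v := by
      rw [← hb, mulVecLin_apply, mulVec_mulVec, hY]
    simp only [Submodule.mem_bot]
    rw [← h2, h1]
  have := Submodule.finrank_sup_add_finrank_inf_eq
    (LinearMap.range X.mulVecLin) (LinearMap.range Y.mulVecLin)
  rw [hinf, finrank_bot, add_zero] at this
  rw [Matrix.rank, hrange, this, Matrix.rank, Matrix.rank]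

lemma rank_fromRows_add (X : Matrix k₁ m ℝ) (Y : Matrix k₂ m ℝ) (Q : Matrix m m ℝ)
    (hX : X * Q = 0) (hY : Y * Q = Y) :
    (fromRows X Y).rank = X.rank + Y.rank := by
  rw [← rank_transpose, transpose_fromRows,
    rank_fromColumns_add Xᵀ Yᵀ Qᵀ (by rw [← transpose_mul, hX, transpose_zero])
      (by rw [← transpose_mul, hY]),
    rank_transpose, rank_transpose]

lemma rank_fromRows_zero (X : Matrix k₁ m ℝ) :
    (fromRows X (0 : Matrix k₂ m ℝ)).rank = X.rank := by
  rw [rank_fromRows_add X 0 (0 : Matrix m m ℝ) (by simp) (by simp), Matrix.rank_zero, add_zero]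

lemma rank_eq_zero_iff' [DecidableEq k₁] (M : Matrix m k₁ ℝ) : M.rank = 0 ↔ M = 0 := by
  constructor
  · intro h
    rw [Matrix.rank, Submodule.finrank_eq_zero, LinearMap.range_eq_bot] at h
    ext i j
    have := congrFun (congrFun (congrArg DFunLike.coe h) (Pi.single j 1)) i
    simpa [mulVecLin_apply] using this
  · rintro rfl
    exact Matrix.rank_zero

end RankAux

section BlockAux

variable {m : Type*} [Fintype m]

lemma rank_fromBlocks_sep (N R S P Q : Matrix m m ℝ)
    (hPN : P * N = 0) (hPR : P * R = R) (hNQ : N * Q = 0) (hSQ : S * Q = S) :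
    (fromBlocks N R S (0 : Matrix m m ℝ)).rank = N.rank + R.rank + S.rank := by
  rw [← fromCols_fromRows_eq_fromBlocks]
  rw [rank_fromColumns_add (fromRows N S) (fromRows R 0) (fromBlocks P 0 0 0)
    (by rw [fromBlocks_mul_fromRows]; simp [hPN])
    (by rw [fromBlocks_mul_fromRows]; simp [hPR])]
  rw [rank_fromRows_add N S Q hNQ hSQ, rank_fromRows_zero]
  ring

end BlockAux

section Drazin

variable {R : Type*} [Ring R] {k : ℕ} {a x : R}

lemma IsDrazin.commute (h : IsDrazin k a x) : Commute a x := h.2.2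

lemma IsDrazin.pow_succ_mul (h : IsDrazin k a x) : a ^ (k + 1) * x = a ^ k := by
  have h1 := h.1
  rw [mul_assoc, ← h.2.2, ← mul_assoc, ← pow_succ] at h1
  exact h1

lemma IsDrazin.mul_proj (h : IsDrazin k a x) : a ^ k * x ^ k = a * x := by
  rw [← h.commute.mul_pow]
  cases k with
  | zero =>
    have h1 : x * a = 1 := by simpa using h.1
    rw [pow_zero, h.2.2, h1]
  | succ n =>
    have he : IsIdempotentElem (a * x) := by
      show a * x * (a * x) = a * x
      rw [mul_assoc, ← mul_assoc x a x, h.2.1]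
    exact he.pow_succ_eq n

lemma IsDrazin.proj_idem (h : IsDrazin k a x) : (a * x) * (a * x) = a * x := by
  rw [mul_assoc, ← mul_assoc x a x, h.2.1]

lemma IsDrazin.proj_mul_pow (h : IsDrazin k a x) : (a * x) * a ^ k = a ^ k := by
  have hc : Commute x (a ^ k) := h.commute.symm.pow_right k
  calc a * x * a ^ k = a * a ^ k * x := by rw [mul_assoc, hc.eq, ← mul_assoc]
    _ = a ^ (k + 1) * x := by rw [← pow_succ']
    _ = a ^ k := h.pow_succ_mul

lemma IsDrazin.pow_mul_proj (h : IsDrazin k a x) : a ^ k * (a * x) = a ^ k := by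
  rw [← mul_assoc, ← pow_succ]
  exact h.pow_succ_mul

lemma IsDrazin.pow_inv_mul_pow (h : IsDrazin k a x) : x ^ k * a ^ k = a * x := by
  have h1 := h.mul_proj
  rwa [(h.commute.pow_pow k k).eq] at h1

end Drazin

theorem tian_rank_formula {n : ℕ} :
    (∀ (k l : ℕ) (A B C BD CD : Matrix (Fin n) (Fin n) ℝ),
      hasIndex B k → IsDrazin k B BD → hasIndex C l → IsDrazin l C CD →
      (Matrix.fromBlocks A (B ^ k) (C ^ l) (0 : Matrix (Fin n) (Fin n) ℝ)).rank =
        (B ^ k).rank + (C ^ l).rank + ((1 - B * BD) * A * (1 - C * CD)).rank) ∧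
    (∀ (k : ℕ) (A B AD : Matrix (Fin n) (Fin n) ℝ),
      hasIndex A k → IsDrazin k A AD →
      ((1 - A * AD) * dsum A B k * (1 - A * AD) = 0 ↔
        (Matrix.fromBlocks (dsum A B k) (A ^ k) (A ^ k)
          (0 : Matrix (Fin n) (Fin n) ℝ)).rank = 2 * (A ^ k).rank)) := by
  have main : ∀ (k l : ℕ) (A B C BD CD : Matrix (Fin n) (Fin n) ℝ),
      IsDrazin k B BD → IsDrazin l C CD →
      (Matrix.fromBlocks A (B ^ k) (C ^ l) (0 : Matrix (Fin n) (Fin n) ℝ)).rank =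
        (B ^ k).rank + (C ^ l).rank + ((1 - B * BD) * A * (1 - C * CD)).rank := by
    intro k l A B C BD CD hB hC
    set P : Matrix (Fin n) (Fin n) ℝ := B * BD with hP
    set Q : Matrix (Fin n) (Fin n) ℝ := C * CD with hQ
    have hPP : P * P = P := by rw [hP]; exact hB.proj_idem
    have hQQ : Q * Q = Q := by rw [hQ]; exact hC.proj_idem
    set L : Matrix (Fin n ⊕ Fin n) (Fin n ⊕ Fin n) ℝ :=
      fromBlocks 1 (-(A * CD ^ l)) 0 1 with hL
    set Rm : Matrix (Fin n ⊕ Fin n) (Fin n ⊕ Fin n) ℝ :=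
      fromBlocks 1 0 (-(BD ^ k * (A - A * Q))) 1 with hRm
    have hLdet : IsUnit L.det := by
      rw [hL, Matrix.det_fromBlocks_zero₂₁]
      simp
    have hRdet : IsUnit Rm.det := by
      rw [hRm, Matrix.det_fromBlocks_zero₁₂]
      simp
    have hCDC : A * CD ^ l * C ^ l = A * Q := by
      rw [mul_assoc, hC.pow_inv_mul_pow, hQ]
    have hBB : B ^ k * (BD ^ k * (A - A * Q)) = P * (A - A * Q) := by
      rw [← mul_assoc, hB.mul_proj, ← hP]
    have key : L * fromBlocks A (B ^ k) (C ^ l) (0 : Matrix (Fin n) (Fin n) ℝ) * Rm =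
        fromBlocks ((1 - P) * A * (1 - Q)) (B ^ k) (C ^ l) 0 := by
      rw [hL, hRm, fromBlocks_multiply, fromBlocks_multiply, fromBlocks_inj]
      refine ⟨?_, by simp, by simp, by simp⟩
      simp only [Matrix.one_mul, Matrix.mul_one, Matrix.neg_mul, Matrix.mul_neg,
        Matrix.zero_mul, Matrix.mul_zero, add_zero, zero_add, neg_zero]
      rw [hCDC, hBB]
      noncomm_ring
    have hrank : (fromBlocks A (B ^ k) (C ^ l) (0 : Matrix (Fin n) (Fin n) ℝ)).rank =
        (fromBlocks ((1 - P) * A * (1 - Q)) (B ^ k) (C ^ l)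
          (0 : Matrix (Fin n) (Fin n) ℝ)).rank := by
      rw [← key, Matrix.rank_mul_eq_left_of_isUnit_det _ _ hRdet,
        Matrix.rank_mul_eq_right_of_isUnit_det _ _ hLdet]
    have hPN : P * ((1 - P) * A * (1 - Q)) = 0 := by
      have h0 : P * ((1 - P) * A * (1 - Q)) = (P - P * P) * (A * (1 - Q)) := by noncomm_ring
      rw [h0, hPP, sub_self, Matrix.zero_mul]
    have hNQ : ((1 - P) * A * (1 - Q)) * Q = 0 := by
      have h0 : ((1 - P) * A * (1 - Q)) * Q = ((1 - P) * A) * (Q - Q * Q) := by noncomm_ring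
      rw [h0, hQQ, sub_self, Matrix.mul_zero]
    have hPR : P * B ^ k = B ^ k := by rw [hP]; exact hB.proj_mul_pow
    have hSQ : C ^ l * Q = C ^ l := by rw [hQ]; exact hC.pow_mul_proj
    rw [hrank, rank_fromBlocks_sep ((1 - P) * A * (1 - Q)) (B ^ k) (C ^ l) P Q hPN hPR hNQ hSQ]
    ring
  refine ⟨fun k l A B C BD CD _ hB _ hC => main k l A B C BD CD hB hC, ?_⟩
  intro k A B AD _ hAD
  have h1 := main k k (dsum A B k) A A AD AD hAD hAD
  constructor
  · intro h
    rw [h1, h, Matrix.rank_zero, add_zero, two_mul]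
  · intro h
    rw [h1, two_mul] at h
    have h0 : ((1 - A * AD) * dsum A B k * (1 - A * AD)).rank = 0 := by omega
    exact (rank_eq_zero_iff' _).mp h0
end
end
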